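/- arXiv:1210.0188 — 6 statements merged into one kernel-verified Lean document; each statement's English description precedes it below -/
import Mathlib

section
/- For positive integers n and q with q ≤ n, there is no representation n = aq + b(q+1) with nonnegative integers a, b if and only if ⌈n/(q+1)⌉ > n/q, i.e., q·⌈n/(q+1)⌉ > n. -/
/-- Corollary 2.1: there is no `q`-partition of `n` iff `⌈n/(q+1)⌉ > n/q`,
i.e. `q * ⌈n/(q+1)⌉ > n`. -/
theorem no_q_partition_iff (n q : ℕ) (hn : 0 < n) (hq : 0 < q) (hqn : q ≤ n) :
    (¬ ∃ a b : ℕ, n = a * q + b * (q + 1)) ↔ q * ((n + q) / (q + 1)) > n := by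
  set c := (n + q) / (q + 1) with hc
  have hpos : 0 < q + 1 := by omega
  have hdm : (q + 1) * c + (n + q) % (q + 1) = n + q := Nat.div_add_mod (n + q) (q + 1)
  have hmlt : (n + q) % (q + 1) < q + 1 := Nat.mod_lt _ hpos
  have hcub : n ≤ (q + 1) * c := by omega
  have hqc : (q + 1) * c = q * c + c := by ring
  constructor
  · intro hno
    by_contra h
    push_neg at h
    apply hno
    -- q * c ≤ n ≤ (q+1) * c, so b := n - q*c satisfies b ≤ c
    obtain ⟨b, hb⟩ : ∃ b, n = q * c + b := ⟨n - q * c, by omega⟩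
    have hbc : b ≤ c := by omega
    refine ⟨c - b, b, ?_⟩
    have hab : (c - b) + b = c := by omega
    calc n = q * c + b := hb
      _ = q * ((c - b) + b) + b := by rw [hab]
      _ = (c - b) * q + b * (q + 1) := by ring
  · intro h ⟨a, b, hab⟩
    have hk : n ≤ (a + b) * (q + 1) := by nlinarith
    have hck : c ≤ a + b := by
      rw [hc, Nat.div_le_iff_le_mul_add_pred hpos]
      simp only [Nat.add_sub_cancel]
      nlinarith [Nat.mul_comm (a + b) (q + 1)]
    have h2 : q * c ≤ q * (a + b) := Nat.mul_le_mul_left q hck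
    have h3 : q * (a + b) ≤ n := by nlinarith
    omega
end

section
/- Let q ≥ 1 and n = aq + b(q+1) with nonnegative integers a, b. The number of parts a+b is maximal among all q-partitions of n if and only if b < q. -/
/-- Lemma 2.3 (characterization): a `q`-partition `n = aq + b(q+1)` is maximal
(in number of parts) iff `b < q`. -/
theorem maximal_q_partition_iff (n q a b : ℕ) (hq : 1 ≤ q)
    (h : n = a * q + b * (q + 1)) :
    (∀ a' b' : ℕ, n = a' * q + b' * (q + 1) → a' + b' ≤ a + b) ↔ b < q := by
  constructor
  · intro hmax
    by_contra hb
    push_neg at hb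
    have key : n = (a + q + 1) * q + (b - q) * (q + 1) := by
      have : (a + q + 1) * q + (b - q) * (q + 1) = a * q + b * (q + 1) := by
        zify [hb]; ring
      rw [this, h]
    have := hmax (a + q + 1) (b - q) key
    omega
  · intro hb a' b' h'
    by_contra hle
    push_neg at hle
    have e : (a + b) * q + b = (a' + b') * q + b' := by
      have h2 := h.symm.trans h'
      ring_nf at h2 ⊢
      linarith
    have h3 : (a + b + 1) * q ≤ (a' + b') * q :=
      Nat.mul_le_mul_right _ (by omega)
    nlinarith
end

section
/- Let q ≥ 1 and n a positive integer with ⌈n/(q+1)⌉ = ⌊n/q⌋. Then n has at most one q-partition: if n = aq + b(q+1) and n = a'q + b'(q+1) with nonnegative integers, then a = a' and b = b'. -/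
/-- Lemma 2.4 (last part): if `⌈n/(q+1)⌉ = ⌊n/q⌋`, then `n` has at most one
`q`-partition. -/
theorem q_partition_unique_of_ceil_eq_floor (n q : ℕ) (hq : 1 ≤ q) (hn : 0 < n)
    (h : (n + q) / (q + 1) = n / q) :
    ∀ a b a' b' : ℕ, n = a * q + b * (q + 1) → n = a' * q + b' * (q + 1) →
      a = a' ∧ b = b' := by
  have hq0 : 0 < q := hq
  have key : ∀ a b : ℕ, n = a * q + b * (q + 1) → a + b = n / q := by
    intro a b hab
    have h1 : (a + b) * q ≤ n := by nlinarith
    have h2 : n ≤ (a + b) * (q + 1) := by nlinarith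
    have le1 : a + b ≤ n / q := (Nat.le_div_iff_mul_le hq0).mpr h1
    have le2 : (n + q) / (q + 1) ≤ a + b := by
      rw [Nat.div_le_iff_le_mul_add_pred (by omega), mul_comm]
      omega
    omega
  intro a b a' b' hab hab'
  have h1 := key a b hab
  have h2 := key a' b' hab'
  have hb : b = b' := by
    have : (a + b) * q + b = (a' + b') * q + b' := by nlinarith
    rw [h1, h2] at this
    omega
  omega
end

section
/- Let q ≥ 2. Suppose n = aq + b(q+1) with b < q (the maximal q-partition), and n = a'(q-1) + b'q with a' ≤ q-1 (the minimal (q-1)-partition). If q divides n then a + b = a' + b'; otherwise a + b + 1 = a' + b'. -/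
/-- Lemma 2.5: comparing the maximal `q`-partition `n = aq + b(q+1)` (`b < q`)
with the minimal `(q-1)`-partition `n = a'(q-1) + b'q` (`a' ≤ q - 1`):
if `q ∣ n` then `a + b = a' + b'`, otherwise `a + b + 1 = a' + b'`. -/
theorem maximal_vs_minimal_partition (n q a b a' b' : ℕ) (hq : 2 ≤ q) (hn : 0 < n)
    (h1 : n = a * q + b * (q + 1)) (hb : b < q)
    (h2 : n = a' * (q - 1) + b' * q) (ha' : a' ≤ q - 1) :
    (q ∣ n → a + b = a' + b') ∧ (¬ q ∣ n → a + b + 1 = a' + b') := by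
  obtain ⟨p, rfl⟩ : ∃ p, q = p + 1 := ⟨q - 1, by omega⟩
  simp only [Nat.add_sub_cancel] at h2 ha'
  have e1 : n = (p + 1) * (a + b) + b := by rw [h1]; ring
  have e2 : n + a' = (a' + b') * (p + 1) := by rw [h2]; ring
  have hmod : n % (p + 1) = b := by
    rw [e1, Nat.mul_add_mod, Nat.mod_eq_of_lt hb]
  have hdvd : (p + 1) ∣ n ↔ b = 0 := by
    rw [Nat.dvd_iff_mod_eq_zero, hmod]
  have key : (a + b) * (p + 1) + (b + a') = (a' + b') * (p + 1) := by
    rw [← e2, e1]; ring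
  have hle : a + b ≤ a' + b' := by
    have : (a + b) * (p + 1) ≤ (a' + b') * (p + 1) := by omega
    exact Nat.le_of_mul_le_mul_right this (by omega)
  obtain ⟨d, hd⟩ : ∃ d, a' + b' = (a + b) + d := ⟨a' + b' - (a + b), by omega⟩
  have hkey2 : d * (p + 1) = b + a' := by
    rw [hd] at key; nlinarith [key]
  have hd1 : d ≤ 1 := by nlinarith
  constructor
  · intro hdv
    have hb0 : b = 0 := hdvd.mp hdv
    have : d = 0 := by nlinarith
    omega
  · intro hdv
    have hb0 : b ≠ 0 := fun h => hdv (hdvd.mpr h)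
    have : d ≠ 0 := by rintro rfl; simp at hkey2; omega
    omega
end

section
/- If f is a proper coloring of the Kronecker product G × Kₙ where G is the complete multipartite graph with parts of sizes m₁,…,m_r, and some color class of f contains two vertices (u, s) and (u', s') with u, u' in different parts of G, then s = s', and consequently that color class has size at most m₁ + ⋯ + m_r. -/
open SimpleGraph
/-- Kronecker (tensor) product of simple graphs: `(x,y)` and `(x',y')` are
adjacent iff `x ~ x'` in `G` and `y ~ y'` in `H`. -/
def kronecker {α β : Type*} (G : SimpleGraph α) (H : SimpleGraph β) :
    SimpleGraph (α × β) where
  Adj p q := G.Adj p.1 q.1 ∧ H.Adj p.2 q.2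
  symm := ⟨fun p q h => ⟨h.1.symm, h.2.symm⟩⟩
  loopless := ⟨fun p h => G.loopless.irrefl p.1 h.1⟩

/-- Claim in Lemma 3.1: if a color class of a proper coloring of
`K_{m₁,…,m_r} × Kₙ` contains vertices `(u, s)` and `(u', s')` with `u, u'` in
different parts, then `s = s'`; consequently that color class has size at most
`m₁ + ⋯ + m_r`. -/
theorem color_class_crossing_parts {r n : ℕ} (m : Fin r → ℕ) {C : Type*}
    [DecidableEq C]
    (f : (kronecker (completeMultipartiteGraph (fun i => Fin (m i)))
        (⊤ : SimpleGraph (Fin n))).Coloring C)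
    (u u' : Σ i : Fin r, Fin (m i)) (s s' : Fin n)
    (hpart : u.1 ≠ u'.1) (hcol : f (u, s) = f (u', s')) :
    s = s' ∧
      (Finset.univ.filter fun v : (Σ i : Fin r, Fin (m i)) × Fin n =>
        f v = f (u, s)).card ≤ ∑ i, m i := by
  have hss : s = s' := by
    by_contra h
    exact f.valid (show (kronecker _ _).Adj (u, s) (u', s') from ⟨hpart, h⟩) hcol
  have key : ∀ (w : Σ i : Fin r, Fin (m i)) (t : Fin n),
      f (w, t) = f (u, s) → t = s := by
    intro w t h
    by_contra hts
    rcases eq_or_ne w.1 u.1 with h1 | h1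
    · have h2 : w.1 ≠ u'.1 := h1 ▸ hpart
      have hts' : t ≠ s' := hss ▸ hts
      exact f.valid (show (kronecker _ _).Adj (w, t) (u', s') from ⟨h2, hts'⟩)
        (h.trans hcol)
    · exact f.valid (show (kronecker _ _).Adj (w, t) (u, s) from ⟨h1, hts⟩) h
  refine ⟨hss, ?_⟩
  calc (Finset.univ.filter fun v : (Σ i : Fin r, Fin (m i)) × Fin n =>
        f v = f (u, s)).card
      ≤ (Finset.univ : Finset (Σ i : Fin r, Fin (m i))).card := by
        apply Finset.card_le_card_of_injOn Prod.fst (fun _ _ => Finset.mem_univ _)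
        intro a ha b hb hab
        simp only [Finset.coe_filter, Set.mem_setOf_eq, Finset.mem_univ,
          true_and] at ha hb
        have ha2 : a.2 = s := key a.1 a.2 (by simpa using ha)
        have hb2 : b.2 = s := key b.1 b.2 (by simpa using hb)
        exact Prod.ext hab (ha2.trans hb2.symm)
    _ = ∑ i, m i := by simp [Finset.card_univ]
end

section
/- Let m₁,…,m_r, n with m = Σm_i ≤ n, and suppose Σᵢ ⌈m_i n/(m+1)⌉ ≥ ⌊mn/(m+1)⌋ and m_i n/(m+1) ≥ ⌈m_i n/(m+2)⌉ for all i. Define h = min{t ≥ m+2 : (∃i, m_i n/t < ⌈m_i n/(t+1)⌉) or (∃ i ≠ j, t ∤ m_i n and t ∤ m_j n)}. Then Σᵢ ⌈m_i n/h⌉ − 1 < ⌈mn/(m+1)⌉. -/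
/-- Ceiling division is antitone in the denominator. -/
lemma ceil_div_anti {a d h : ℕ} (hd : 0 < d) (hdh : d ≤ h) :
    (a + (h - 1)) / h ≤ (a + (d - 1)) / d := by
  have hh : 0 < h := hd.trans_le hdh
  rw [Nat.div_le_iff_le_mul_add_pred hh]
  have h1 : a ≤ d * ((a + (d - 1)) / d) := by
    have := le_smul_ceilDiv (α := ℕ) (β := ℕ) hd (b := a)
    rw [smul_eq_mul, Nat.ceilDiv_eq_add_pred_div] at this
    have he : a + d - 1 = a + (d - 1) := by omega
    rwa [he] at this
  have h2 : d * ((a + (d - 1)) / d) ≤ h * ((a + (d - 1)) / d) :=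
    Nat.mul_le_mul_right _ hdh
  omega

/-- Claim 4's arithmetic core in Theorem 3.2: with `m = ∑ mᵢ ≤ n`,
`∑ᵢ ⌈mᵢn/(m+1)⌉ ≥ ⌊mn/(m+1)⌋`, and `mᵢn/(m+1) ≥ ⌈mᵢn/(m+2)⌉` for all `i`,
and `h` the least `t ≥ m+2` such that either `mᵢn/t < ⌈mᵢn/(t+1)⌉` for some
`i`, or `t` divides neither `mᵢn` nor `mⱼn` for some `i ≠ j`, one has
`∑ᵢ ⌈mᵢn/h⌉ − 1 < ⌈mn/(m+1)⌉`. -/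
theorem claim4_arith {r n h : ℕ} (m : Fin r → ℕ) (hm : ∀ i, 0 < m i)
    (hmn : (∑ i, m i) ≤ n)
    (h1 : (∑ i, (m i * n + (∑ i, m i)) / ((∑ i, m i) + 1)) ≥
      ((∑ i, m i) * n) / ((∑ i, m i) + 1))
    (h2 : ∀ i, ((∑ i, m i) + 1) * ((m i * n + ((∑ i, m i) + 1)) / ((∑ i, m i) + 2)) ≤
      m i * n)
    (hh : IsLeast
      {t : ℕ | (∑ i, m i) + 2 ≤ t ∧
        ((∃ i, m i * n < t * ((m i * n + t) / (t + 1))) ∨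
          (∃ i j, i ≠ j ∧ ¬ t ∣ m i * n ∧ ¬ t ∣ m j * n))} h) :
    (∑ i, (m i * n + (h - 1)) / h) - 1 <
      ((∑ i, m i) * n + (∑ i, m i)) / ((∑ i, m i) + 1) := by
  obtain ⟨⟨hht, hcase⟩, -⟩ := hh
  -- Fin r is nonempty
  have hi : Nonempty (Fin r) := by
    rcases hcase with ⟨i, -⟩ | ⟨i, -, -⟩ <;> exact ⟨i⟩
  set M := ∑ i, m i with hM
  have hM1 : 1 ≤ M := by
    obtain ⟨i⟩ := hi
    calc 1 ≤ m i := hm i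
    _ ≤ M := Finset.single_le_sum (fun j _ => Nat.zero_le _) (Finset.mem_univ i)
  -- Step A: termwise, the h-ceiling is at most the (M+2)-ceiling
  have stepA : (∑ i, (m i * n + (h - 1)) / h) ≤
      ∑ i, (m i * n + ((M + 2) - 1)) / (M + 2) :=
    Finset.sum_le_sum fun i _ => ceil_div_anti (by omega) hht
  -- Step B: the sum of (M+2)-ceilings is at most M*n/(M+1)
  have stepB : (∑ i, (m i * n + ((M + 2) - 1)) / (M + 2)) ≤ M * n / (M + 1) := by
    rw [Nat.le_div_iff_mul_le (by omega)]
    calc (∑ i, (m i * n + ((M + 2) - 1)) / (M + 2)) * (M + 1)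
        = ∑ i, (M + 1) * ((m i * n + (M + 1)) / (M + 2)) := by
          rw [Finset.sum_mul]
          exact Finset.sum_congr rfl fun i _ => by rw [mul_comm]; norm_num
      _ ≤ ∑ i, m i * n := Finset.sum_le_sum fun i _ => h2 i
      _ = M * n := by rw [hM, Finset.sum_mul]
  have stepC : M * n / (M + 1) ≤ (M * n + M) / (M + 1) :=
    Nat.div_le_div_right (Nat.le_add_right _ _)
  have hrhs : 1 ≤ (M * n + M) / (M + 1) := by
    rw [Nat.le_div_iff_mul_le (by omega)]
    have : M ≤ M * n := Nat.le_mul_of_pos_right M (by omega)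
    omega
  omega
end
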